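/- In the heterogeneous acceptance model with spine length m ≥ 1, branch widths w_0, …, w_{m−1}, spine acceptance rate p_s and branch acceptance rate p_t, the expected yield satisfies E[τ] = Σ_{i=1}^{m} p_s^i + Σ_{i=0}^{m−1} p_s^i (1−p_s) φ(p_t, w_i) (1 + ℓ̄(p_t, D)) + 1; in particular E[τ] is at least this right-hand side (Proposition 1, Spine Tree Expected Yield, tight case of independent branch chains). -/

import Mathlib

open MeasureTheory ProbabilityTheory

/-- Initial all-success run length of the finite `Bool`-valued sequence
`X 0, …, X (n-1)`: the largest `l ∈ {0,…,n}` with `X 0 = ⋯ = X (l-1) = true`. -/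
def runLen (X : ℕ → Bool) (n : ℕ) : ℕ :=
  Nat.findGreatest (fun l => ∀ i < l, X i = true) n

/-- `φ(p, w) = 1 - (1-p)^w`. -/
noncomputable def phi (p : ℝ) (w : ℕ) : ℝ := 1 - (1 - p) ^ w

/-- Expected branch-chain extension length: `ℓ̄(p, D) = ∑_{k=1}^{D-1} p^k`. -/
noncomputable def lbar (p : ℝ) (D : ℕ) : ℝ := ∑ k ∈ Finset.Icc 1 (D - 1), p ^ k

/-- Yield of one verification cycle of the spine tree: with spine run length
`L = runLen S m`, the yield is `L + 1` if `L = m`, and otherwise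
`L + 1 + 1{∃ j < w L, B L j = 1} · (1 + runLen (C L) (D-1))`. -/
def tau (m D : ℕ) (w : ℕ → ℕ) (S : ℕ → Ω → Bool) (B C : ℕ → ℕ → Ω → Bool)
    (ω : Ω) : ℕ :=
  let L := runLen (fun i => S i ω) m
  if L = m then L + 1
  else L + 1 + (if ∃ j < w L, B L j ω = true then
      1 + runLen (fun k => C L k ω) (D - 1) else 0)

/-- Proposition 1 (Spine Tree Expected Yield, tight case of independent branch
chains): in the heterogeneous acceptance model with spine length `m ≥ 1`, branch
widths `w_0, …, w_{m-1}`, spine rate `p_s` and branch rate `p_t`, the expected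
yield equals `∑_{i=1}^{m} p_s^i + ∑_{i=0}^{m-1} p_s^i (1-p_s) φ(p_t,w_i)(1+ℓ̄(p_t,D)) + 1`;
in particular it is at least this right-hand side. -/
lemma runLen_ge_iff (X : ℕ → Bool) {n i : ℕ} (hi : i ≤ n) :
    i ≤ runLen X n ↔ ∀ j < i, X j = true := by
  refine ⟨fun h j hj => ?_, fun h => Nat.le_findGreatest hi h⟩
  have hP := Nat.findGreatest_spec (P := fun l => ∀ i < l, X i = true) (Nat.zero_le n)
      (fun i hi => absurd hi (Nat.not_lt_zero i))
  exact hP j (lt_of_lt_of_le hj h)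

lemma runLen_eq_sum (X : ℕ → Bool) (n : ℕ) [DecidablePred fun i => ∀ j ≤ i, X j = true] :
    runLen X n = ∑ i ∈ Finset.range n, (if ∀ j ≤ i, X j = true then 1 else 0) := by
  classical
  induction n with
  | zero => rfl
  | succ n ih =>
    rw [Finset.sum_range_succ]
    show Nat.findGreatest (fun l => ∀ i < l, X i = true) (n+1) = _
    rw [Nat.findGreatest_succ]
    by_cases h : ∀ i < n + 1, X i = true
    · rw [if_pos h]
      have h1 : ∀ i ∈ Finset.range n, (if ∀ j ≤ i, X j = true then 1 else 0) = 1 := by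
        intro i hi
        rw [if_pos fun j hj => h j (by simp at hi; omega)]
      have h2 : (if ∀ j ≤ n, X j = true then 1 else 0) = 1 :=
        if_pos fun j hj => h j (by omega)
      rw [Finset.sum_congr rfl h1, h2, Finset.sum_const, Finset.card_range]
      simp
    · rw [if_neg h]
      have h2 : ¬ (∀ j ≤ n, X j = true) := fun hc => h fun i hi => hc i (by omega)
      rw [if_neg h2, add_zero]
      exact ih

lemma meas_bool_false {Ω : Type*} [MeasurableSpace Ω] (μ : Measure Ω) [IsProbabilityMeasure μ]
    {g : Ω → Bool} (hg : Measurable g) :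
    μ {ω | g ω = false} = 1 - μ {ω | g ω = true} := by
  have h1 : {ω | g ω = false} = {ω | g ω = true}ᶜ := by
    ext ω; simp
  have hm : MeasurableSet {ω | g ω = true} := hg (measurableSet_singleton true)
  rw [h1, measure_compl hm (measure_ne_top μ _), measure_univ]

lemma indep_bool_prod {Ω ι : Type*} [MeasurableSpace Ω] {μ : Measure Ω}
    {f : ι → Ω → Bool}
    (h : iIndepFun f μ) (I : Finset ι) (b : ι → Bool) :
    μ (⋂ i ∈ I, {ω | f i ω = b i}) = ∏ i ∈ I, μ {ω | f i ω = b i} := by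
  have := h.measure_inter_preimage_eq_mul I (sets := fun i => {b i})
      (fun i _ => measurableSet_singleton _)
  exact this

lemma integral_ite_prop {Ω : Type*} [MeasurableSpace Ω] (μ : Measure Ω) [IsFiniteMeasure μ]
    (P : Ω → Prop) [DecidablePred P] (h : MeasurableSet {ω | P ω}) :
    ∫ ω, (if P ω then (1:ℝ) else 0) ∂μ = (μ {ω | P ω}).toReal := by
  have : (fun ω => if P ω then (1:ℝ) else 0)
      = Set.indicator {ω | P ω} (fun _ => (1:ℝ)) := by
    funext ω; by_cases hω : P ω <;> simp [Set.indicator_apply, hω]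
  rw [this, integral_indicator_const (1:ℝ) h, smul_eq_mul, mul_one]; rfl

lemma integrable_ite_prop {Ω : Type*} [MeasurableSpace Ω] (μ : Measure Ω) [IsFiniteMeasure μ]
    (P : Ω → Prop) [DecidablePred P] (h : MeasurableSet {ω | P ω}) :
    Integrable (fun ω => if P ω then (1:ℝ) else 0) μ := by
  have : (fun ω => if P ω then (1:ℝ) else 0)
      = Set.indicator {ω | P ω} (fun _ => (1:ℝ)) := by
    funext ω; by_cases hω : P ω <;> simp [Set.indicator_apply, hω]
  rw [this]
  exact (integrable_const (1:ℝ)).indicator h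


lemma meas_pattern {Ω : Type*} [MeasurableSpace Ω] (μ : Measure Ω)
    [IsProbabilityMeasure μ] (m D : ℕ)
    (ps pt : ℝ) (hps0 : 0 ≤ ps) (hps1 : ps ≤ 1) (hpt0 : 0 ≤ pt) (hpt1 : pt ≤ 1)
    (w : ℕ → ℕ) (S : ℕ → Ω → Bool) (B C : ℕ → ℕ → Ω → Bool)
    (hS : ∀ i < m, μ {ω | S i ω = true} = ENNReal.ofReal ps)
    (hSmeas : ∀ i, Measurable (S i))
    (hBmeas : ∀ i j, Measurable (B i j))
    (hCmeas : ∀ i k, Measurable (C i k))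
    (hB : ∀ i < m, ∀ j < w i, μ {ω | B i j ω = true} = ENNReal.ofReal pt)
    (hC : ∀ i < m, ∀ k < D - 1, μ {ω | C i k ω = true} = ENNReal.ofReal pt)
    (hindep : iIndepFun
      (Sum.elim (fun i : {i : ℕ // i < m} => S i.1)
        (Sum.elim
          (fun p : {p : ℕ × ℕ // p.1 < m ∧ p.2 < w p.1} => B p.1.1 p.1.2)
          (fun p : {p : ℕ × ℕ // p.1 < m ∧ p.2 < D - 1} => C p.1.1 p.1.2))) μ)
    (l : ℕ) (hl : l < m) (nb nc : ℕ) (hnb : nb ≤ w l) (hnc : nc ≤ D - 1) :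
    μ {ω | (∀ j < l, S j ω = true) ∧ S l ω = false ∧
        (∀ j < nb, B l j ω = false) ∧ (∀ j < nc, C l j ω = true)}
      = ENNReal.ofReal (ps ^ l * (1 - ps) * (1 - pt) ^ nb * pt ^ nc) := by
  classical
  set F := Sum.elim (fun i : {i : ℕ // i < m} => S i.1)
        (Sum.elim
          (fun p : {p : ℕ × ℕ // p.1 < m ∧ p.2 < w p.1} => B p.1.1 p.1.2)
          (fun p : {p : ℕ × ℕ // p.1 < m ∧ p.2 < D - 1} => C p.1.1 p.1.2)) with hF
  set bfun : {i : ℕ // i < m} ⊕ ({p : ℕ × ℕ // p.1 < m ∧ p.2 < w p.1}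
      ⊕ {p : ℕ × ℕ // p.1 < m ∧ p.2 < D - 1}) → Bool :=
    Sum.elim (fun s => decide (s.1 < l)) (Sum.elim (fun _ => false) (fun _ => true)) with hb
  let e1 : {i : ℕ // i < m} ↪ {i : ℕ // i < m} ⊕ ({p : ℕ × ℕ // p.1 < m ∧ p.2 < w p.1}
      ⊕ {p : ℕ × ℕ // p.1 < m ∧ p.2 < D - 1}) := ⟨Sum.inl, Sum.inl_injective⟩
  let e2 : {p : ℕ × ℕ // p.1 < m ∧ p.2 < w p.1} ↪ {i : ℕ // i < m}
      ⊕ ({p : ℕ × ℕ // p.1 < m ∧ p.2 < w p.1} ⊕ {p : ℕ × ℕ // p.1 < m ∧ p.2 < D - 1}) :=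
    ⟨fun x => Sum.inr (Sum.inl x), show Function.Injective (fun x => Sum.inr (Sum.inl x)) from by
      intro a b h; simpa using h⟩
  let e3 : {p : ℕ × ℕ // p.1 < m ∧ p.2 < D - 1} ↪ {i : ℕ // i < m}
      ⊕ ({p : ℕ × ℕ // p.1 < m ∧ p.2 < w p.1} ⊕ {p : ℕ × ℕ // p.1 < m ∧ p.2 < D - 1}) :=
    ⟨fun x => Sum.inr (Sum.inr x), show Function.Injective (fun x => Sum.inr (Sum.inr x)) from by intro a b h; simpa using h⟩
  let IS : Finset {i : ℕ // i < m} := (Finset.range (l+1)).subtype _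
  let IB : Finset {p : ℕ × ℕ // p.1 < m ∧ p.2 < w p.1} :=
    ((Finset.range nb).image (fun j => (l, j))).subtype _
  let IC : Finset {p : ℕ × ℕ // p.1 < m ∧ p.2 < D - 1} :=
    ((Finset.range nc).image (fun j => (l, j))).subtype _
  let I := IS.map e1 ∪ (IB.map e2 ∪ IC.map e3)
  have hev : {ω | (∀ j < l, S j ω = true) ∧ S l ω = false ∧
        (∀ j < nb, B l j ω = false) ∧ (∀ j < nc, C l j ω = true)}
      = ⋂ x ∈ I, {ω | F x ω = bfun x} := by
    ext ω
    simp only [I, IS, IB, IC, e1, e2, e3, Set.mem_setOf_eq, Set.mem_iInter,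
      Finset.mem_union, Finset.mem_map, Finset.mem_subtype, Finset.mem_image,
      Finset.mem_range, Function.Embedding.coeFn_mk]
    constructor
    · rintro ⟨h1, h2, h3, h4⟩ x hx
      rcases hx with ⟨a, ha, rfl⟩ | ⟨a, ha, rfl⟩ | ⟨a, ha, rfl⟩
      · simp only [hF, hb, Sum.elim_inl]
        rcases Nat.lt_or_ge a.1 l with hal | hal
        · simp [hal, h1 a.1 hal]
        · have : a.1 = l := by omega
          simp [this, h2, hal]
      · obtain ⟨j, hj, hja⟩ := ha
        simp only [hF, hb, Sum.elim_inr, Sum.elim_inl]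
        have h1' : a.1 = (l, j) := hja ▸ rfl
        rw [h1']
        exact h3 j hj
      · obtain ⟨j, hj, hja⟩ := ha
        simp only [hF, hb, Sum.elim_inr]
        have h1' : a.1 = (l, j) := hja ▸ rfl
        rw [h1']
        simp [h4 j hj]
    · intro h
      refine ⟨fun j hj => ?_, ?_, fun j hj => ?_, fun j hj => ?_⟩
      · have := h (Sum.inl ⟨j, hj.trans hl⟩) (Or.inl ⟨⟨j, hj.trans hl⟩, by show j < l + 1; omega, rfl⟩)
        simpa [hF, hb, hj] using this
      · have := h (Sum.inl ⟨l, hl⟩) (Or.inl ⟨⟨l, hl⟩, by show l < l + 1; omega, rfl⟩)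
        simpa [hF, hb] using this
      · have := h (Sum.inr (Sum.inl ⟨(l, j), ⟨hl, hj.trans_le hnb⟩⟩))
          (Or.inr (Or.inl ⟨⟨(l, j), ⟨hl, hj.trans_le hnb⟩⟩, ⟨j, hj, rfl⟩, rfl⟩))
        simpa [hF, hb] using this
      · have := h (Sum.inr (Sum.inr ⟨(l, j), ⟨hl, hj.trans_le hnc⟩⟩))
          (Or.inr (Or.inr ⟨⟨(l, j), ⟨hl, hj.trans_le hnc⟩⟩, ⟨j, hj, rfl⟩, rfl⟩))
        simpa [hF, hb] using this
  have hd1 : Disjoint (IS.map e1) (IB.map e2 ∪ IC.map e3) := by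
    simp only [Finset.disjoint_left, Finset.mem_union, Finset.mem_map]
    rintro x ⟨a, _, rfl⟩ (⟨c, _, hc⟩ | ⟨c, _, hc⟩) <;> simp [e1, e2, e3] at hc
  have hd2 : Disjoint (IB.map e2) (IC.map e3) := by
    simp only [Finset.disjoint_left, Finset.mem_map]
    rintro x ⟨a, _, rfl⟩ ⟨c, _, hc⟩
    simp [e2, e3] at hc
  have h1ps : 1 - ENNReal.ofReal ps = ENNReal.ofReal (1 - ps) := by
    rw [ENNReal.ofReal_sub 1 hps0, ENNReal.ofReal_one]
  have h1pt : 1 - ENNReal.ofReal pt = ENNReal.ofReal (1 - pt) := by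
    rw [ENNReal.ofReal_sub 1 hpt0, ENNReal.ofReal_one]
  have hPS : ∏ x ∈ IS, μ {ω | F (e1 x) ω = bfun (e1 x)}
      = ENNReal.ofReal ps ^ l * (1 - ENNReal.ofReal ps) := by
    have hterm : ∀ x ∈ IS, μ {ω | F (e1 x) ω = bfun (e1 x)}
        = if x.1 < l then ENNReal.ofReal ps else 1 - ENNReal.ofReal ps := by
      intro x _
      by_cases hx : x.1 < l
      · simp only [hF, hb, e1, Function.Embedding.coeFn_mk, Sum.elim_inl, hx, decide_true]
        exact hS x.1 x.2
      · simp only [hF, hb, e1, Function.Embedding.coeFn_mk, Sum.elim_inl, hx, decide_false,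
          if_false]
        rw [meas_bool_false μ (hSmeas x.1), hS x.1 x.2]
    rw [Finset.prod_congr rfl hterm]
    have hstep : ∏ x ∈ IS, (if x.1 < l then ENNReal.ofReal ps else 1 - ENNReal.ofReal ps)
        = ∏ j ∈ Finset.range (l+1),
            (if j < l then ENNReal.ofReal ps else 1 - ENNReal.ofReal ps) := by
      have hfil : (Finset.range (l+1)).filter (fun i => i < m) = Finset.range (l+1) :=
        Finset.filter_true_of_mem (fun x hx => by simp at hx; omega)
      conv_rhs => rw [← hfil, ← Finset.subtype_map (fun i => i < m), Finset.prod_map]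
      rfl
    rw [hstep, Finset.prod_range_succ, if_neg (lt_irrefl l),
      Finset.prod_congr rfl (fun j hj => if_pos (Finset.mem_range.mp hj)),
      Finset.prod_const, Finset.card_range]
  have hPB : ∏ x ∈ IB, μ {ω | F (e2 x) ω = bfun (e2 x)} = (1 - ENNReal.ofReal pt) ^ nb := by
    have hterm : ∀ x ∈ IB, μ {ω | F (e2 x) ω = bfun (e2 x)} = 1 - ENNReal.ofReal pt := by
      intro x _
      simp only [hF, hb, e2, Function.Embedding.coeFn_mk, Sum.elim_inr, Sum.elim_inl]
      rw [meas_bool_false μ (hBmeas x.1.1 x.1.2), hB x.1.1 x.2.1 x.1.2 x.2.2]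
    rw [Finset.prod_congr rfl hterm, Finset.prod_const]
    congr 1
    have hinj : Function.Injective (fun j => ((l, j) : ℕ × ℕ)) := by
      intro a b hab; simpa using hab
    have hfil : (((Finset.range nb).image (fun j => (l, j)))).filter
        (fun p : ℕ × ℕ => p.1 < m ∧ p.2 < w p.1) = (Finset.range nb).image (fun j => (l, j)) :=
      Finset.filter_true_of_mem (fun x hx => by
        simp only [Finset.mem_image, Finset.mem_range] at hx
        obtain ⟨j, hj, rfl⟩ := hx
        exact ⟨hl, by show j < w l; omega⟩)
    calc IB.card = (IB.map (Function.Embedding.subtype _)).card := (Finset.card_map _).symm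
      _ = nb := by
          rw [Finset.subtype_map, hfil, Finset.card_image_of_injective _ hinj,
            Finset.card_range]
  have hPC : ∏ x ∈ IC, μ {ω | F (e3 x) ω = bfun (e3 x)} = ENNReal.ofReal pt ^ nc := by
    have hterm : ∀ x ∈ IC, μ {ω | F (e3 x) ω = bfun (e3 x)} = ENNReal.ofReal pt := by
      intro x _
      simp only [hF, hb, e3, Function.Embedding.coeFn_mk, Sum.elim_inr]
      exact hC x.1.1 x.2.1 x.1.2 x.2.2
    rw [Finset.prod_congr rfl hterm, Finset.prod_const]
    congr 1
    have hinj : Function.Injective (fun j => ((l, j) : ℕ × ℕ)) := by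
      intro a b hab; simpa using hab
    have hfil : (((Finset.range nc).image (fun j => (l, j)))).filter
        (fun p : ℕ × ℕ => p.1 < m ∧ p.2 < D - 1) = (Finset.range nc).image (fun j => (l, j)) :=
      Finset.filter_true_of_mem (fun x hx => by
        simp only [Finset.mem_image, Finset.mem_range] at hx
        obtain ⟨j, hj, rfl⟩ := hx
        exact ⟨hl, by show j < D - 1; omega⟩)
    calc IC.card = (IC.map (Function.Embedding.subtype _)).card := (Finset.card_map _).symm
      _ = nc := by
          rw [Finset.subtype_map, hfil, Finset.card_image_of_injective _ hinj,
            Finset.card_range]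
  rw [hev, indep_bool_prod hindep I bfun]
  show (∏ x ∈ IS.map e1 ∪ (IB.map e2 ∪ IC.map e3), μ {ω | F x ω = bfun x}) = _
  rw [Finset.prod_union hd1, Finset.prod_union hd2, Finset.prod_map, Finset.prod_map,
    Finset.prod_map]
  rw [hPS, hPB, hPC, h1ps, h1pt, ← ENNReal.ofReal_pow hps0, ← ENNReal.ofReal_pow
    (by linarith : (0:ℝ) ≤ 1 - pt), ← ENNReal.ofReal_pow hpt0,
    ← ENNReal.ofReal_mul (pow_nonneg hps0 l),
    ← ENNReal.ofReal_mul (pow_nonneg (by linarith : (0:ℝ) ≤ 1 - pt) nb),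
    ← ENNReal.ofReal_mul (mul_nonneg (pow_nonneg hps0 l) (by linarith : (0:ℝ) ≤ 1 - ps))]
  congr 1
  ring

lemma meas_spine {Ω : Type*} [MeasurableSpace Ω] (μ : Measure Ω)
    [IsProbabilityMeasure μ] (m D : ℕ)
    (ps : ℝ) (hps0 : 0 ≤ ps)
    (w : ℕ → ℕ) (S : ℕ → Ω → Bool) (B C : ℕ → ℕ → Ω → Bool)
    (hS : ∀ i < m, μ {ω | S i ω = true} = ENNReal.ofReal ps)
    (hindep : iIndepFun
      (Sum.elim (fun i : {i : ℕ // i < m} => S i.1)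
        (Sum.elim
          (fun p : {p : ℕ × ℕ // p.1 < m ∧ p.2 < w p.1} => B p.1.1 p.1.2)
          (fun p : {p : ℕ × ℕ // p.1 < m ∧ p.2 < D - 1} => C p.1.1 p.1.2))) μ)
    (a : ℕ) (ha : a ≤ m) :
    μ {ω | ∀ j < a, S j ω = true} = ENNReal.ofReal (ps ^ a) := by
  classical
  set F := Sum.elim (fun i : {i : ℕ // i < m} => S i.1)
        (Sum.elim
          (fun p : {p : ℕ × ℕ // p.1 < m ∧ p.2 < w p.1} => B p.1.1 p.1.2)
          (fun p : {p : ℕ × ℕ // p.1 < m ∧ p.2 < D - 1} => C p.1.1 p.1.2)) with hF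
  let e1 : {i : ℕ // i < m} ↪ {i : ℕ // i < m} ⊕ ({p : ℕ × ℕ // p.1 < m ∧ p.2 < w p.1}
      ⊕ {p : ℕ × ℕ // p.1 < m ∧ p.2 < D - 1}) := ⟨Sum.inl, Sum.inl_injective⟩
  let IS : Finset {i : ℕ // i < m} := (Finset.range a).subtype _
  let I := IS.map e1
  have hev : {ω | ∀ j < a, S j ω = true} = ⋂ x ∈ I, {ω | F x ω = true} := by
    ext ω
    simp only [I, IS, e1, Set.mem_setOf_eq, Set.mem_iInter, Finset.mem_map,
      Finset.mem_subtype, Finset.mem_range, Function.Embedding.coeFn_mk]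
    constructor
    · rintro h1 x ⟨j, hj, rfl⟩
      simp only [hF, Sum.elim_inl]
      exact h1 j.1 hj
    · intro h j hj
      have := h (Sum.inl ⟨j, lt_of_lt_of_le hj ha⟩)
        ⟨⟨j, lt_of_lt_of_le hj ha⟩, by show j < a; omega, rfl⟩
      simpa [hF] using this
  rw [hev, indep_bool_prod hindep I (fun _ => true), Finset.prod_map]
  have hterm : ∀ x ∈ IS, μ {ω | F (e1 x) ω = true} = ENNReal.ofReal ps := by
    intro x _
    simp only [hF, e1, Function.Embedding.coeFn_mk, Sum.elim_inl]
    exact hS x.1 x.2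
  have hfil : (Finset.range a).filter (fun i => i < m) = Finset.range a :=
    Finset.filter_true_of_mem (fun x hx => by simp at hx; omega)
  have hcard : IS.card = a := by
    calc IS.card = (IS.map (Function.Embedding.subtype _)).card := (Finset.card_map _).symm
      _ = a := by rw [Finset.subtype_map, hfil, Finset.card_range]
  rw [Finset.prod_congr rfl hterm, Finset.prod_const, hcard, ← ENNReal.ofReal_pow hps0]


theorem spine_tree_expected_yield {Ω : Type*} [MeasurableSpace Ω] (μ : Measure Ω)
    [IsProbabilityMeasure μ] (m D : ℕ) (hm : 1 ≤ m) (hD : 1 ≤ D)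
    (ps pt : ℝ) (hps : ps ∈ Set.Icc (0 : ℝ) 1) (hpt : pt ∈ Set.Icc (0 : ℝ) 1)
    (w : ℕ → ℕ) (S : ℕ → Ω → Bool) (B C : ℕ → ℕ → Ω → Bool)
    (hSmeas : ∀ i, Measurable (S i))
    (hBmeas : ∀ i j, Measurable (B i j))
    (hCmeas : ∀ i k, Measurable (C i k))
    (hS : ∀ i < m, μ {ω | S i ω = true} = ENNReal.ofReal ps)
    (hB : ∀ i < m, ∀ j < w i, μ {ω | B i j ω = true} = ENNReal.ofReal pt)
    (hC : ∀ i < m, ∀ k < D - 1, μ {ω | C i k ω = true} = ENNReal.ofReal pt)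
    (hindep : iIndepFun
      (Sum.elim (fun i : {i : ℕ // i < m} => S i.1)
        (Sum.elim
          (fun p : {p : ℕ × ℕ // p.1 < m ∧ p.2 < w p.1} => B p.1.1 p.1.2)
          (fun p : {p : ℕ × ℕ // p.1 < m ∧ p.2 < D - 1} => C p.1.1 p.1.2))) μ) :
    (∫ ω, (tau m D w S B C ω : ℝ) ∂μ)
        = (∑ i ∈ Finset.Icc 1 m, ps ^ i)
          + (∑ i ∈ Finset.range m,
              ps ^ i * (1 - ps) * phi pt (w i) * (1 + lbar pt D)) + 1 ∧
    (∑ i ∈ Finset.Icc 1 m, ps ^ i)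
        + (∑ i ∈ Finset.range m,
            ps ^ i * (1 - ps) * phi pt (w i) * (1 + lbar pt D)) + 1
      ≤ ∫ ω, (tau m D w S B C ω : ℝ) ∂μ := by
  classical
  obtain ⟨hps0, hps1⟩ := hps
  obtain ⟨hpt0, hpt1⟩ := hpt
  -- pointwise decomposition of tau
  have key : ∀ ω, ((tau m D w S B C ω : ℕ) : ℝ)
      = 1 + (∑ i ∈ Finset.range m, if (∀ j < i + 1, S j ω = true) then (1:ℝ) else 0)
        + ∑ l ∈ Finset.range m,
            (((if (∀ j < l, S j ω = true) ∧ S l ω = false then (1:ℝ) else 0)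
              - (if (∀ j < l, S j ω = true) ∧ S l ω = false
                    ∧ (∀ j < w l, B l j ω = false) then (1:ℝ) else 0))
             + ∑ k ∈ Finset.range (D - 1),
                ((if (∀ j < l, S j ω = true) ∧ S l ω = false
                      ∧ (∀ j < k + 1, C l j ω = true) then (1:ℝ) else 0)
                 - (if (∀ j < l, S j ω = true) ∧ S l ω = false
                      ∧ (∀ j < w l, B l j ω = false)
                      ∧ (∀ j < k + 1, C l j ω = true) then (1:ℝ) else 0))) := by
    intro ω
    set L := runLen (fun i => S i ω) m with hLdef
    have hLle : L ≤ m := Nat.findGreatest_le m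
    have hrun : ∀ j < L, S j ω = true := (runLen_ge_iff _ hLle).mp le_rfl
    have hfail : L < m → S L ω = false := by
      intro hLm
      have hnot : ¬ (L + 1 ≤ runLen (fun i => S i ω) m) := by omega
      rw [runLen_ge_iff _ (by omega)] at hnot
      push_neg at hnot
      obtain ⟨j, hj1, hj2⟩ := hnot
      have hjL : j = L := by
        by_contra hne
        exact hj2 (hrun j (by omega))
      rw [hjL] at hj2
      exact Bool.eq_false_iff.mpr hj2
    have htau : tau m D w S B C ω = if L = m then L + 1
        else L + 1 + (if ∃ j < w L, B L j ω = true
          then 1 + runLen (fun k => C L k ω) (D - 1) else 0) := by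
      rw [hLdef]; rfl
    have hsum1 : (∑ i ∈ Finset.range m,
        if (∀ j < i + 1, S j ω = true) then (1:ℝ) else 0) = L := by
      have hterm : ∀ i ∈ Finset.range m,
          (if (∀ j < i + 1, S j ω = true) then (1:ℝ) else 0)
          = if i ∈ Finset.range L then 1 else 0 := by
        intro i hi
        rw [Finset.mem_range] at hi
        by_cases h : i < L
        · rw [if_pos (fun j hj => hrun j (by omega)), if_pos (Finset.mem_range.mpr h)]
        · rw [if_neg, if_neg (by simpa using h)]
          intro hc
          have := (runLen_ge_iff (fun i => S i ω) (n := m) (i := i+1) (by omega)).mpr hc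
          omega
      rw [Finset.sum_congr rfl hterm, Finset.sum_ite_mem,
        Finset.inter_eq_right.mpr (by intro x hx; simp at hx ⊢; omega),
        Finset.sum_const, Finset.card_range]
      simp
    by_cases hLm : L = m
    · rw [htau, if_pos hLm, hsum1]
      have hzero : ∀ l ∈ Finset.range m,
          (((if (∀ j < l, S j ω = true) ∧ S l ω = false then (1:ℝ) else 0)
              - (if (∀ j < l, S j ω = true) ∧ S l ω = false
                    ∧ (∀ j < w l, B l j ω = false) then (1:ℝ) else 0))
             + ∑ k ∈ Finset.range (D - 1),
                ((if (∀ j < l, S j ω = true) ∧ S l ω = false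
                      ∧ (∀ j < k + 1, C l j ω = true) then (1:ℝ) else 0)
                 - (if (∀ j < l, S j ω = true) ∧ S l ω = false
                      ∧ (∀ j < w l, B l j ω = false)
                      ∧ (∀ j < k + 1, C l j ω = true) then (1:ℝ) else 0))) = 0 := by
        intro l hl
        rw [Finset.mem_range] at hl
        have hSl : S l ω = true := hrun l (by omega)
        have hnP2 : ¬ ((∀ j < l, S j ω = true) ∧ S l ω = false) := by
          rintro ⟨-, h2⟩
          rw [hSl] at h2
          exact Bool.noConfusion h2
        rw [if_neg hnP2, if_neg (fun hc => hnP2 ⟨hc.1, hc.2.1⟩),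
          Finset.sum_eq_zero (fun k hk => by
            rw [if_neg (fun hc => hnP2 ⟨hc.1, hc.2.1⟩),
              if_neg (fun hc => hnP2 ⟨hc.1, hc.2.1⟩)]
            ring)]
        ring
      rw [Finset.sum_eq_zero hzero]
      push_cast
      ring
    · have hLlt : L < m := lt_of_le_of_ne hLle hLm
      have hSL : S L ω = false := hfail hLlt
      rw [htau, if_neg hLm, hsum1]
      have honly : ∑ l ∈ Finset.range m,
          (((if (∀ j < l, S j ω = true) ∧ S l ω = false then (1:ℝ) else 0)
              - (if (∀ j < l, S j ω = true) ∧ S l ω = false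
                    ∧ (∀ j < w l, B l j ω = false) then (1:ℝ) else 0))
             + ∑ k ∈ Finset.range (D - 1),
                ((if (∀ j < l, S j ω = true) ∧ S l ω = false
                      ∧ (∀ j < k + 1, C l j ω = true) then (1:ℝ) else 0)
                 - (if (∀ j < l, S j ω = true) ∧ S l ω = false
                      ∧ (∀ j < w l, B l j ω = false)
                      ∧ (∀ j < k + 1, C l j ω = true) then (1:ℝ) else 0)))
          = (((if (∀ j < L, S j ω = true) ∧ S L ω = false then (1:ℝ) else 0)
              - (if (∀ j < L, S j ω = true) ∧ S L ω = false
                    ∧ (∀ j < w L, B L j ω = false) then (1:ℝ) else 0))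
             + ∑ k ∈ Finset.range (D - 1),
                ((if (∀ j < L, S j ω = true) ∧ S L ω = false
                      ∧ (∀ j < k + 1, C L j ω = true) then (1:ℝ) else 0)
                 - (if (∀ j < L, S j ω = true) ∧ S L ω = false
                      ∧ (∀ j < w L, B L j ω = false)
                      ∧ (∀ j < k + 1, C L j ω = true) then (1:ℝ) else 0))) := by
        refine Finset.sum_eq_single_of_mem L (Finset.mem_range.mpr hLlt) ?_
        intro b hb hne
        have hnP2 : ¬ ((∀ j < b, S j ω = true) ∧ S b ω = false) := by
          rintro ⟨h1, h2⟩
          rcases Nat.lt_or_ge b L with hbL | hbL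
          · rw [hrun b hbL] at h2
            exact Bool.noConfusion h2
          · have hLb : L < b := by omega
            have h3 := h1 L hLb
            rw [hSL] at h3
            exact Bool.noConfusion h3
        rw [if_neg hnP2, if_neg (fun hc => hnP2 ⟨hc.1, hc.2.1⟩),
          Finset.sum_eq_zero (fun k hk => by
            rw [if_neg (fun hc => hnP2 ⟨hc.1, hc.2.1⟩),
              if_neg (fun hc => hnP2 ⟨hc.1, hc.2.1⟩)]
            ring)]
        ring
      rw [honly]
      have hP2 : (∀ j < L, S j ω = true) ∧ S L ω = false := ⟨hrun, hSL⟩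
      by_cases hBall : ∀ j < w L, B L j ω = false
      · have hnEx : ¬ (∃ j < w L, B L j ω = true) := by
          rintro ⟨j, hj, hb⟩
          rw [hBall j hj] at hb
          exact Bool.noConfusion hb
        have hP3 : (∀ j < L, S j ω = true) ∧ S L ω = false
            ∧ (∀ j < w L, B L j ω = false) := ⟨hrun, hSL, hBall⟩
        rw [if_neg hnEx, if_pos hP2, if_pos hP3,
          Finset.sum_eq_zero (fun k hk => by
            by_cases hc : ∀ j < k + 1, C L j ω = true
            · have hP4 : (∀ j < L, S j ω = true) ∧ S L ω = false
                  ∧ (∀ j < k + 1, C L j ω = true) := ⟨hrun, hSL, hc⟩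
              have hP5 : (∀ j < L, S j ω = true) ∧ S L ω = false
                  ∧ (∀ j < w L, B L j ω = false)
                  ∧ (∀ j < k + 1, C L j ω = true) := ⟨hrun, hSL, hBall, hc⟩
              rw [if_pos hP4, if_pos hP5]
              ring
            · rw [if_neg (fun h => hc h.2.2), if_neg (fun h => hc h.2.2.2)]
              ring)]
        push_cast
        ring
      · have hEx : ∃ j < w L, B L j ω = true := by
          push_neg at hBall
          obtain ⟨j, hj, hbj⟩ := hBall
          exact ⟨j, hj, by simpa using hbj⟩
        have hnP3 : ¬ ((∀ j < L, S j ω = true) ∧ S L ω = false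
            ∧ (∀ j < w L, B L j ω = false)) := by
          rintro ⟨-, -, h3⟩
          obtain ⟨j, hj, hbj⟩ := hEx
          rw [h3 j hj] at hbj
          exact Bool.noConfusion hbj
        have hP2 : (∀ j < L, S j ω = true) ∧ S L ω = false := ⟨hrun, hSL⟩
        rw [if_pos hEx, if_pos hP2, if_neg hnP3]
        have hsumk : ∑ k ∈ Finset.range (D - 1),
            ((if (∀ j < L, S j ω = true) ∧ S L ω = false
                  ∧ (∀ j < k + 1, C L j ω = true) then (1:ℝ) else 0)
             - (if (∀ j < L, S j ω = true) ∧ S L ω = false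
                  ∧ (∀ j < w L, B L j ω = false)
                  ∧ (∀ j < k + 1, C L j ω = true) then (1:ℝ) else 0))
            = ∑ k ∈ Finset.range (D - 1),
                (if (∀ j < k + 1, C L j ω = true) then (1:ℝ) else 0) := by
          refine Finset.sum_congr rfl fun k hk => ?_
          rw [if_neg (show ¬((∀ j < L, S j ω = true) ∧ S L ω = false
              ∧ (∀ j < w L, B L j ω = false) ∧ (∀ j < k + 1, C L j ω = true)) from
              fun hc => hnP3 ⟨hc.1, hc.2.1, hc.2.2.1⟩)]
          by_cases hc : ∀ j < k + 1, C L j ω = true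
          · have hP4 : (∀ j < L, S j ω = true) ∧ S L ω = false
                ∧ (∀ j < k + 1, C L j ω = true) := ⟨hrun, hSL, hc⟩
            rw [if_pos hP4, if_pos hc]
            ring
          · rw [if_neg (show ¬((∀ j < L, S j ω = true) ∧ S L ω = false
                ∧ (∀ j < k + 1, C L j ω = true)) from fun h => hc h.2.2), if_neg hc]
            ring
        rw [hsumk]
        have hrl : ((runLen (fun k => C L k ω) (D - 1) : ℕ) : ℝ)
            = ∑ k ∈ Finset.range (D - 1),
                (if (∀ j < k + 1, C L j ω = true) then (1:ℝ) else 0) := by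
          rw [runLen_eq_sum]
          push_cast
          refine Finset.sum_congr rfl fun k hk => ?_
          simp [Nat.lt_succ_iff]
        push_cast
        rw [hrl]
        ring
  -- measurable sets
  have mS1 : ∀ n : ℕ, MeasurableSet {ω | ∀ j < n, S j ω = true} := by
    intro n
    have h : {ω | ∀ j < n, S j ω = true}
        = ⋂ (j : ℕ) (_ : j < n), {ω | S j ω = true} := by
      ext ω; simp
    rw [h]
    exact MeasurableSet.iInter fun j => MeasurableSet.iInter fun _ =>
      hSmeas j (measurableSet_singleton true)
  have mSf : ∀ l : ℕ, MeasurableSet {ω | S l ω = false} :=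
    fun l => hSmeas l (measurableSet_singleton false)
  have mB1 : ∀ l : ℕ, MeasurableSet {ω | ∀ j < w l, B l j ω = false} := by
    intro l
    have h : {ω | ∀ j < w l, B l j ω = false}
        = ⋂ (j : ℕ) (_ : j < w l), {ω | B l j ω = false} := by
      ext ω; simp
    rw [h]
    exact MeasurableSet.iInter fun j => MeasurableSet.iInter fun _ =>
      hBmeas l j (measurableSet_singleton false)
  have mC1 : ∀ l k : ℕ, MeasurableSet {ω | ∀ j < k + 1, C l j ω = true} := by
    intro l k
    have h : {ω | ∀ j < k + 1, C l j ω = true}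
        = ⋂ (j : ℕ) (_ : j < k + 1), {ω | C l j ω = true} := by
      ext ω; simp
    rw [h]
    exact MeasurableSet.iInter fun j => MeasurableSet.iInter fun _ =>
      hCmeas l j (measurableSet_singleton true)
  have mP2 : ∀ l : ℕ, MeasurableSet {ω | (∀ j < l, S j ω = true) ∧ S l ω = false} :=
    fun l => (mS1 l).inter (mSf l)
  have mP3 : ∀ l : ℕ, MeasurableSet {ω | (∀ j < l, S j ω = true) ∧ S l ω = false
      ∧ (∀ j < w l, B l j ω = false)} :=
    fun l => (mS1 l).inter ((mSf l).inter (mB1 l))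
  have mP4 : ∀ l k : ℕ, MeasurableSet {ω | (∀ j < l, S j ω = true) ∧ S l ω = false
      ∧ (∀ j < k + 1, C l j ω = true)} :=
    fun l k => (mS1 l).inter ((mSf l).inter (mC1 l k))
  have mP5 : ∀ l k : ℕ, MeasurableSet {ω | (∀ j < l, S j ω = true) ∧ S l ω = false
      ∧ (∀ j < w l, B l j ω = false) ∧ (∀ j < k + 1, C l j ω = true)} :=
    fun l k => (mS1 l).inter ((mSf l).inter ((mB1 l).inter (mC1 l k)))
  -- nonnegativity facts
  have h1ps' : (0:ℝ) ≤ 1 - ps := by linarith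
  have h1pt' : (0:ℝ) ≤ 1 - pt := by linarith
  -- measure values
  have hMP := meas_pattern μ m D ps pt hps0 hps1 hpt0 hpt1 w S B C hS hSmeas
    hBmeas hCmeas hB hC hindep
  have t1 : ∀ i < m, (μ {ω | ∀ j < i + 1, S j ω = true}).toReal = ps ^ (i + 1) := by
    intro i hi
    rw [meas_spine μ m D ps hps0 w S B C hS hindep (i+1) (by omega),
      ENNReal.toReal_ofReal (pow_nonneg hps0 _)]
  have t2 : ∀ l < m, (μ {ω | (∀ j < l, S j ω = true) ∧ S l ω = false}).toReal
      = ps ^ l * (1 - ps) := by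
    intro l hl
    have h0 := hMP l hl 0 0 (Nat.zero_le _) (Nat.zero_le _)
    have hset : {ω | (∀ j < l, S j ω = true) ∧ S l ω = false
        ∧ (∀ j < 0, B l j ω = false) ∧ (∀ j < 0, C l j ω = true)}
        = {ω | (∀ j < l, S j ω = true) ∧ S l ω = false} := by
      ext ω; simp
    rw [hset] at h0
    rw [h0, ENNReal.toReal_ofReal (by
      exact mul_nonneg (mul_nonneg (mul_nonneg (pow_nonneg hps0 _) h1ps')
        (pow_nonneg h1pt' _)) (pow_nonneg hpt0 _))]
    ring
  have t3 : ∀ l < m, (μ {ω | (∀ j < l, S j ω = true) ∧ S l ω = false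
      ∧ (∀ j < w l, B l j ω = false)}).toReal
      = ps ^ l * (1 - ps) * (1 - pt) ^ w l := by
    intro l hl
    have h0 := hMP l hl (w l) 0 le_rfl (Nat.zero_le _)
    have hset : {ω | (∀ j < l, S j ω = true) ∧ S l ω = false
        ∧ (∀ j < w l, B l j ω = false) ∧ (∀ j < 0, C l j ω = true)}
        = {ω | (∀ j < l, S j ω = true) ∧ S l ω = false
            ∧ (∀ j < w l, B l j ω = false)} := by
      ext ω; simp
    rw [hset] at h0
    rw [h0, ENNReal.toReal_ofReal (by
      exact mul_nonneg (mul_nonneg (mul_nonneg (pow_nonneg hps0 _) h1ps')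
        (pow_nonneg h1pt' _)) (pow_nonneg hpt0 _))]
    ring
  have t4 : ∀ l < m, ∀ k < D - 1, (μ {ω | (∀ j < l, S j ω = true) ∧ S l ω = false
      ∧ (∀ j < k + 1, C l j ω = true)}).toReal
      = ps ^ l * (1 - ps) * pt ^ (k + 1) := by
    intro l hl k hk
    have h0 := hMP l hl 0 (k+1) (Nat.zero_le _) (by omega)
    have hset : {ω | (∀ j < l, S j ω = true) ∧ S l ω = false
        ∧ (∀ j < 0, B l j ω = false) ∧ (∀ j < k + 1, C l j ω = true)}
        = {ω | (∀ j < l, S j ω = true) ∧ S l ω = false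
            ∧ (∀ j < k + 1, C l j ω = true)} := by
      ext ω; simp
    rw [hset] at h0
    rw [h0, ENNReal.toReal_ofReal (by
      exact mul_nonneg (mul_nonneg (mul_nonneg (pow_nonneg hps0 _) h1ps')
        (pow_nonneg h1pt' _)) (pow_nonneg hpt0 _))]
    ring
  have t5 : ∀ l < m, ∀ k < D - 1, (μ {ω | (∀ j < l, S j ω = true) ∧ S l ω = false
      ∧ (∀ j < w l, B l j ω = false) ∧ (∀ j < k + 1, C l j ω = true)}).toReal
      = ps ^ l * (1 - ps) * (1 - pt) ^ w l * pt ^ (k + 1) := by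
    intro l hl k hk
    rw [hMP l hl (w l) (k+1) le_rfl (by omega), ENNReal.toReal_ofReal (by
      exact mul_nonneg (mul_nonneg (mul_nonneg (pow_nonneg hps0 _) h1ps')
        (pow_nonneg h1pt' _)) (pow_nonneg hpt0 _))]
  -- integrability
  have igf1 : ∀ i : ℕ, Integrable
      (fun ω => if (∀ j < i + 1, S j ω = true) then (1:ℝ) else 0) μ :=
    fun i => integrable_ite_prop μ _ (mS1 (i+1))
  have ig2 : ∀ l : ℕ, Integrable
      (fun ω => if (∀ j < l, S j ω = true) ∧ S l ω = false then (1:ℝ) else 0) μ :=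
    fun l => integrable_ite_prop μ _ (mP2 l)
  have ig3 : ∀ l : ℕ, Integrable
      (fun ω => if (∀ j < l, S j ω = true) ∧ S l ω = false
        ∧ (∀ j < w l, B l j ω = false) then (1:ℝ) else 0) μ :=
    fun l => integrable_ite_prop μ _ (mP3 l)
  have ig4 : ∀ l k : ℕ, Integrable
      (fun ω => if (∀ j < l, S j ω = true) ∧ S l ω = false
        ∧ (∀ j < k + 1, C l j ω = true) then (1:ℝ) else 0) μ :=
    fun l k => integrable_ite_prop μ _ (mP4 l k)
  have ig5 : ∀ l k : ℕ, Integrable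
      (fun ω => if (∀ j < l, S j ω = true) ∧ S l ω = false
        ∧ (∀ j < w l, B l j ω = false)
        ∧ (∀ j < k + 1, C l j ω = true) then (1:ℝ) else 0) μ :=
    fun l k => integrable_ite_prop μ _ (mP5 l k)
  have ig23 : ∀ l : ℕ, Integrable
      (fun ω => (if (∀ j < l, S j ω = true) ∧ S l ω = false then (1:ℝ) else 0)
        - (if (∀ j < l, S j ω = true) ∧ S l ω = false
              ∧ (∀ j < w l, B l j ω = false) then (1:ℝ) else 0)) μ :=
    fun l => (ig2 l).sub (ig3 l)
  have ig45 : ∀ l k : ℕ, Integrable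
      (fun ω => (if (∀ j < l, S j ω = true) ∧ S l ω = false
            ∧ (∀ j < k + 1, C l j ω = true) then (1:ℝ) else 0)
        - (if (∀ j < l, S j ω = true) ∧ S l ω = false
            ∧ (∀ j < w l, B l j ω = false)
            ∧ (∀ j < k + 1, C l j ω = true) then (1:ℝ) else 0)) μ :=
    fun l k => (ig4 l k).sub (ig5 l k)
  have igA : Integrable (fun ω => ∑ i ∈ Finset.range m,
      if (∀ j < i + 1, S j ω = true) then (1:ℝ) else 0) μ :=
    integrable_finset_sum _ fun i _ => igf1 i
  have igInner : ∀ l : ℕ, Integrable (fun ω =>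
      (((if (∀ j < l, S j ω = true) ∧ S l ω = false then (1:ℝ) else 0)
        - (if (∀ j < l, S j ω = true) ∧ S l ω = false
              ∧ (∀ j < w l, B l j ω = false) then (1:ℝ) else 0))
       + ∑ k ∈ Finset.range (D - 1),
          ((if (∀ j < l, S j ω = true) ∧ S l ω = false
                ∧ (∀ j < k + 1, C l j ω = true) then (1:ℝ) else 0)
           - (if (∀ j < l, S j ω = true) ∧ S l ω = false
                ∧ (∀ j < w l, B l j ω = false)
                ∧ (∀ j < k + 1, C l j ω = true) then (1:ℝ) else 0)))) μ := by
    intro l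
    exact ((ig2 l).sub (ig3 l)).add
      (integrable_finset_sum _ fun k _ => (ig4 l k).sub (ig5 l k))
  have ig1A : Integrable (fun ω => 1 + ∑ i ∈ Finset.range m,
      if (∀ j < i + 1, S j ω = true) then (1:ℝ) else 0) μ :=
    (integrable_const 1).add igA
  have igB : Integrable (fun ω => ∑ l ∈ Finset.range m,
      (((if (∀ j < l, S j ω = true) ∧ S l ω = false then (1:ℝ) else 0)
        - (if (∀ j < l, S j ω = true) ∧ S l ω = false
              ∧ (∀ j < w l, B l j ω = false) then (1:ℝ) else 0))
       + ∑ k ∈ Finset.range (D - 1),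
          ((if (∀ j < l, S j ω = true) ∧ S l ω = false
                ∧ (∀ j < k + 1, C l j ω = true) then (1:ℝ) else 0)
           - (if (∀ j < l, S j ω = true) ∧ S l ω = false
                ∧ (∀ j < w l, B l j ω = false)
                ∧ (∀ j < k + 1, C l j ω = true) then (1:ℝ) else 0)))) μ :=
    integrable_finset_sum _ fun l _ => igInner l
  -- the integral computation
  have hint : (∫ ω, (tau m D w S B C ω : ℝ) ∂μ)
      = 1 + (∑ i ∈ Finset.range m, ps ^ (i + 1))
        + ∑ l ∈ Finset.range m,
            ((ps ^ l * (1 - ps) - ps ^ l * (1 - ps) * (1 - pt) ^ w l)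
             + ∑ k ∈ Finset.range (D - 1),
                (ps ^ l * (1 - ps) * pt ^ (k + 1)
                 - ps ^ l * (1 - ps) * (1 - pt) ^ w l * pt ^ (k + 1))) := by
    simp only [key]
    rw [integral_add ig1A igB, integral_add (integrable_const 1) igA, integral_const,
      integral_finset_sum _ (fun i _ => igf1 i),
      integral_finset_sum _ (fun l _ => igInner l)]
    simp only [probReal_univ, measure_univ, ENNReal.toReal_one, smul_eq_mul, mul_one]
    congr 1
    · congr 1
      refine Finset.sum_congr rfl fun i hi => ?_
      rw [integral_ite_prop μ _ (mS1 (i+1)), t1 i (Finset.mem_range.mp hi)]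
    · refine Finset.sum_congr rfl fun l hl => ?_
      rw [Finset.mem_range] at hl
      rw [integral_add (ig23 l)
          (integrable_finset_sum _ fun k _ => ig45 l k),
        integral_sub (ig2 l) (ig3 l),
        integral_finset_sum _ (fun k _ => ig45 l k),
        integral_ite_prop μ _ (mP2 l), integral_ite_prop μ _ (mP3 l), t2 l hl, t3 l hl]
      congr 1
      refine Finset.sum_congr rfl fun k hk => ?_
      rw [Finset.mem_range] at hk
      rw [integral_sub (ig4 l k) (ig5 l k), integral_ite_prop μ _ (mP4 l k),
        integral_ite_prop μ _ (mP5 l k), t4 l hl k hk, t5 l hl k hk]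
  -- final algebra
  have hIcc : (∑ i ∈ Finset.Icc 1 m, ps ^ i) = ∑ i ∈ Finset.range m, ps ^ (i + 1) := by
    rw [← Finset.Ico_add_one_right_eq_Icc, Finset.sum_Ico_eq_sum_range]
    exact Finset.sum_congr (by norm_num) fun i _ => by rw [Nat.add_comm]
  have hlbar : lbar pt D = ∑ k ∈ Finset.range (D - 1), pt ^ (k + 1) := by
    rw [lbar, ← Finset.Ico_add_one_right_eq_Icc, Finset.sum_Ico_eq_sum_range]
    exact Finset.sum_congr (by norm_num) fun k _ => by rw [Nat.add_comm]
  have hmain : (∫ ω, (tau m D w S B C ω : ℝ) ∂μ)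
      = (∑ i ∈ Finset.Icc 1 m, ps ^ i)
        + (∑ i ∈ Finset.range m,
            ps ^ i * (1 - ps) * phi pt (w i) * (1 + lbar pt D)) + 1 := by
    rw [hint, hIcc]
    simp only [hlbar, phi]
    have hterm : ∀ l ∈ Finset.range m,
        ((ps ^ l * (1 - ps) - ps ^ l * (1 - ps) * (1 - pt) ^ w l)
         + ∑ k ∈ Finset.range (D - 1),
            (ps ^ l * (1 - ps) * pt ^ (k + 1)
             - ps ^ l * (1 - ps) * (1 - pt) ^ w l * pt ^ (k + 1)))
        = ps ^ l * (1 - ps) * (1 - (1 - pt) ^ w l)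
            * (1 + ∑ k ∈ Finset.range (D - 1), pt ^ (k + 1)) := by
      intro l _
      rw [show (∑ k ∈ Finset.range (D - 1),
          (ps ^ l * (1 - ps) * pt ^ (k + 1)
            - ps ^ l * (1 - ps) * (1 - pt) ^ w l * pt ^ (k + 1)))
          = ∑ k ∈ Finset.range (D - 1),
              (ps ^ l * (1 - ps) * (1 - (1 - pt) ^ w l)) * pt ^ (k + 1)
          from Finset.sum_congr rfl fun k _ => by ring, ← Finset.mul_sum]
      ring
    rw [Finset.sum_congr rfl hterm]
    ring
  exact ⟨hmain, le_of_eq hmain.symm⟩
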